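/- Let m ≥ 2, let 1 ≤ p ≤ m − 1, let 0 ≤ r < k^p, set J = J(p,r), and let i ∈ J and j ∉ J be leaves. Then C_{ij} · (Σ_{u ∈ J} Σ_{v ∈ J} C_{uv}) = (Σ_{u ∈ J} C_{iu}) · (Σ_{u ∈ J} C_{ju}). (These algebraic identities encode that, for jointly normal leaves with covariance C, any leaf inside a subtree and any leaf outside it are conditionally independent given the subtree sum; they are exactly the conditional independence conditions of the conditional independent Gaussian tree.) -/

import Mathlib

open MeasureTheory ProbabilityTheory
open scoped Classical

/-- `lcaHeight k i j` is the height above the leaves of the lowest common ancestor of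
leaves `i` and `j` in the infinite `k`-ary tree: the least `l ≥ 1` with `⌊i/k^l⌋ = ⌊j/k^l⌋`. -/
noncomputable def lcaHeight (k i j : ℕ) : ℕ := sInf {l | 1 ≤ l ∧ i / k ^ l = j / k ^ l}

/-- The covariance matrix of the regular `(k,m)` conditionally independent Gaussian tree with
leaf standard deviation `σ` and dependency parameter `ρ`. -/
noncomputable def treeCov (k m : ℕ) (ρ σ : ℝ) : Matrix (Fin (k ^ m)) (Fin (k ^ m)) ℝ :=
  Matrix.of fun i j =>
    if (i : ℕ) = (j : ℕ) then σ ^ 2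
    else σ ^ 2 * ρ * (1 / (k : ℝ) + (1 - 1 / (k : ℝ)) * ρ) ^ (lcaHeight k i j - 1)

/-- `treeBlock k m p r` is the set `J(p,r)` of leaves of the regular `(k,m)` tree descending
from the `r`-th node at level `p`. -/
def treeBlock (k m p r : ℕ) : Finset (Fin (k ^ m)) :=
  Finset.univ.filter fun i => (i : ℕ) / k ^ (m - p) = r

/- ----------------- auxiliary lemmas ----------------- -/

/-- Monotonicity: agreeing at level `l` implies agreeing at any higher level. -/
lemma div_pow_mono (k : ℕ) {a b l l' : ℕ} (h : l ≤ l') (hab : a / k ^ l = b / k ^ l) :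
    a / k ^ l' = b / k ^ l' := by
  have hkl : k ^ l' = k ^ l * k ^ (l' - l) := by rw [← pow_add]; congr 1; omega
  rw [hkl, ← Nat.div_div_eq_div_mul, ← Nat.div_div_eq_div_mul, hab]

lemma lcaHeight_symm (k i j : ℕ) : lcaHeight k i j = lcaHeight k j i := by
  unfold lcaHeight
  congr 1
  ext l
  exact and_congr_right fun _ => eq_comm

/-- Characterization of `lcaHeight` as the least level of agreement. -/
lemma lcaHeight_eq (k i j l : ℕ) (hl : 1 ≤ l) (h : i / k ^ l = j / k ^ l)
    (hmin : ∀ t, 1 ≤ t → t < l → i / k ^ t ≠ j / k ^ t) : lcaHeight k i j = l := by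
  have hmem : l ∈ {l | 1 ≤ l ∧ i / k ^ l = j / k ^ l} := ⟨hl, h⟩
  have h1 : lcaHeight k i j ≤ l := Nat.sInf_le hmem
  have h2 : lcaHeight k i j ∈ {l | 1 ≤ l ∧ i / k ^ l = j / k ^ l} :=
    Nat.sInf_mem ⟨l, hmem⟩
  rcases lt_or_eq_of_le h1 with h3 | h3
  · exact absurd h2.2 (hmin _ h2.1 h3)
  · exact h3

/-- The level-`l` block around a leaf `u`. -/
noncomputable def levelBlock (k m l : ℕ) (u : Fin (k ^ m)) : Finset (Fin (k ^ m)) :=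
  Finset.univ.filter fun v => (v : ℕ) / k ^ l = (u : ℕ) / k ^ l

lemma levelBlock_card (k m : ℕ) (hk : 1 ≤ k) {l : ℕ} (hl : l ≤ m) (u : Fin (k ^ m)) :
    (levelBlock k m l u).card = k ^ l := by
  have hkl : 0 < k ^ l := Nat.pow_pos hk
  set c := (u : ℕ) / k ^ l with hc
  have hclt : c < k ^ (m - l) := by
    apply (Nat.div_lt_iff_lt_mul hkl).2
    calc (u : ℕ) < k ^ m := u.isLt
    _ = k ^ (m - l) * k ^ l := by rw [← pow_add]; congr 1; omega
  have hub : (c + 1) * k ^ l ≤ k ^ m := by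
    calc (c + 1) * k ^ l ≤ k ^ (m - l) * k ^ l := Nat.mul_le_mul_right _ hclt
    _ = k ^ m := by rw [← pow_add]; congr 1; omega
  -- map to ℕ
  have hmap : (levelBlock k m l u).card
      = ((Finset.Ico (c * k ^ l) ((c + 1) * k ^ l))).card := by
    refine Finset.card_bij (fun v _ => (v : ℕ)) ?_ ?_ ?_
    · intro v hv
      simp only [levelBlock, Finset.mem_filter, Finset.mem_univ, true_and] at hv
      rw [Finset.mem_Ico]
      constructor
      · calc c * k ^ l = (v : ℕ) / k ^ l * k ^ l := by rw [hv]
          _ ≤ (v : ℕ) := Nat.div_mul_le_self _ _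
      · have h1 : (v : ℕ) / k ^ l < (v : ℕ) / k ^ l + 1 := Nat.lt_succ_self _
        have h2 : (v : ℕ) < ((v : ℕ) / k ^ l + 1) * k ^ l :=
          (Nat.div_lt_iff_lt_mul hkl).1 h1
        rw [hv] at h2
        exact h2
    · intro v₁ _ v₂ _ h; exact Fin.ext h
    · intro n hn
      rw [Finset.mem_Ico] at hn
      have hnlt : n < k ^ m := lt_of_lt_of_le hn.2 hub
      refine ⟨⟨n, hnlt⟩, ?_, rfl⟩
      simp only [levelBlock, Finset.mem_filter, Finset.mem_univ, true_and]
      have : n / k ^ l = c := by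
        have h1 : c ≤ n / k ^ l := (Nat.le_div_iff_mul_le hkl).2 hn.1
        have h2 : n / k ^ l < c + 1 := (Nat.div_lt_iff_lt_mul hkl).2 hn.2
        omega
      exact this
  rw [hmap, Nat.card_Ico]
  have : (c + 1) * k ^ l = c * k ^ l + k ^ l := by ring
  omega

lemma levelBlock_zero (k m : ℕ) (u : Fin (k ^ m)) : levelBlock k m 0 u = {u} := by
  ext v
  simp only [levelBlock, Finset.mem_filter, Finset.mem_univ, true_and, pow_zero,
    Nat.div_one, Finset.mem_singleton]
  exact ⟨fun h => Fin.ext h, fun h => by rw [h]⟩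

lemma levelBlock_mono (k m : ℕ) {l l' : ℕ} (h : l ≤ l') (u : Fin (k ^ m)) :
    levelBlock k m l u ⊆ levelBlock k m l' u := by
  intro v hv
  simp only [levelBlock, Finset.mem_filter, Finset.mem_univ, true_and] at hv ⊢
  exact div_pow_mono k h hv

/-- Row sums of `treeCov` over a level block are a constant depending only on the level. -/
lemma sum_levelBlock (k m : ℕ) (hk : 1 ≤ k) (σ ρ : ℝ) {d : ℕ} (hd : d ≤ m)
    (u : Fin (k ^ m)) :
    ∑ v ∈ levelBlock k m d u, treeCov k m ρ σ u v
      = σ ^ 2 + σ ^ 2 * ρ * ∑ t ∈ Finset.range d,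
          ((k : ℝ) ^ (t + 1) - (k : ℝ) ^ t)
            * (1 / (k : ℝ) + (1 - 1 / (k : ℝ)) * ρ) ^ t := by
  induction d with
  | zero => simp [levelBlock_zero, treeCov]
  | succ l ih =>
    have hl : l ≤ m := by omega
    have hsub : levelBlock k m l u ⊆ levelBlock k m (l + 1) u :=
      levelBlock_mono k m (by omega) u
    rw [← Finset.sum_sdiff hsub, ih hl]
    have hconst : ∀ v ∈ levelBlock k m (l + 1) u \ levelBlock k m l u,
        treeCov k m ρ σ u v
          = σ ^ 2 * ρ * (1 / (k : ℝ) + (1 - 1 / (k : ℝ)) * ρ) ^ l := by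
      intro v hv
      rw [Finset.mem_sdiff] at hv
      obtain ⟨hv1, hv2⟩ := hv
      simp only [levelBlock, Finset.mem_filter, Finset.mem_univ, true_and] at hv1 hv2
      have hne : (u : ℕ) ≠ (v : ℕ) := by
        intro h
        exact hv2 (by rw [h])
      have hlca : lcaHeight k u v = l + 1 := by
        apply lcaHeight_eq k u v (l + 1) (by omega) hv1.symm
        intro t ht1 ht2 habs
        exact hv2 (div_pow_mono k (by omega) habs.symm)
      simp [treeCov, hne, hlca]
    rw [Finset.sum_congr rfl hconst, Finset.sum_const]
    have hcard : (levelBlock k m (l + 1) u \ levelBlock k m l u).card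
        = k ^ (l + 1) - k ^ l := by
      rw [Finset.card_sdiff_of_subset hsub, levelBlock_card k m hk (by omega) u,
        levelBlock_card k m hk hl u]
    rw [hcard, Finset.sum_range_succ]
    have hle : k ^ l ≤ k ^ (l + 1) := Nat.pow_le_pow_right hk (by omega)
    have hcast : ((k ^ (l + 1) - k ^ l : ℕ) : ℝ) = (k : ℝ) ^ (l + 1) - (k : ℝ) ^ l := by
      push_cast [Nat.cast_sub hle]
      ring
    rw [nsmul_eq_mul, hcast]
    ring

/-- The theorem. -/
theorem treeCov_condIndep_identity (k m : ℕ) (hk : 2 ≤ k) (hm : 2 ≤ m) (σ ρ : ℝ) (hσ : 0 < σ)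
    (hρ_lb : -(1 / ((k : ℝ) - 1)) < ρ) (hρ_ub : ρ < 1)
    (p r : ℕ) (hp1 : 1 ≤ p) (hp2 : p ≤ m - 1) (hr : r < k ^ p)
    (i j : Fin (k ^ m)) (hi : i ∈ treeBlock k m p r) (hj : j ∉ treeBlock k m p r) :
    treeCov k m ρ σ i j *
        (∑ u ∈ treeBlock k m p r, ∑ v ∈ treeBlock k m p r, treeCov k m ρ σ u v)
      = (∑ u ∈ treeBlock k m p r, treeCov k m ρ σ i u) *
        (∑ u ∈ treeBlock k m p r, treeCov k m ρ σ j u) := by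
  set d := m - p with hd
  have hd1 : 1 ≤ d := by omega
  have hdm : d ≤ m := by omega
  have hk1 : 1 ≤ k := by omega
  simp only [treeBlock, Finset.mem_filter, Finset.mem_univ, true_and] at hi hj
  -- the block is the level-d block of any of its members
  have hblock : ∀ u : Fin (k ^ m), (u : ℕ) / k ^ d = r →
      treeBlock k m p r = levelBlock k m d u := by
    intro u hu
    ext v
    simp only [treeBlock, levelBlock, Finset.mem_filter, Finset.mem_univ, true_and, hu, hd]
    rw [show (u : ℕ) / k ^ (m - p) = r from hu]
  -- the constant row sum
  set A := σ ^ 2 + σ ^ 2 * ρ * ∑ t ∈ Finset.range d,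
      ((k : ℝ) ^ (t + 1) - (k : ℝ) ^ t)
        * (1 / (k : ℝ) + (1 - 1 / (k : ℝ)) * ρ) ^ t with hA
  have hrow : ∀ u : Fin (k ^ m), u ∈ treeBlock k m p r →
      ∑ v ∈ treeBlock k m p r, treeCov k m ρ σ u v = A := by
    intro u hu
    simp only [treeBlock, Finset.mem_filter, Finset.mem_univ, true_and] at hu
    rw [hblock u hu]
    exact sum_levelBlock k m hk1 σ ρ hdm u
  -- C j u is constant over u in the block
  have houter : ∀ u : Fin (k ^ m), u ∈ treeBlock k m p r →
      treeCov k m ρ σ j u = treeCov k m ρ σ j i := by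
    intro u hu
    simp only [treeBlock, Finset.mem_filter, Finset.mem_univ, true_and] at hu
    have hset : {l | 1 ≤ l ∧ (j : ℕ) / k ^ l = (u : ℕ) / k ^ l}
        = {l | 1 ≤ l ∧ (j : ℕ) / k ^ l = (i : ℕ) / k ^ l} := by
      have key : ∀ a : ℕ, a / k ^ d = r → ∀ l, 1 ≤ l → (j : ℕ) / k ^ l = a / k ^ l →
          d < l ∧ a / k ^ l = r / k ^ (l - d) := by
        intro a ha l hl hja
        have hld : d < l := by
          by_contra h
          push_neg at h
          have : (j : ℕ) / k ^ d = a / k ^ d := div_pow_mono k h hja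
          rw [ha] at this
          exact hj this
        refine ⟨hld, ?_⟩
        have : k ^ l = k ^ d * k ^ (l - d) := by rw [← pow_add]; congr 1; omega
        rw [this, ← Nat.div_div_eq_div_mul, ha]
      ext l
      simp only [Set.mem_setOf_eq]
      constructor
      · rintro ⟨hl, hjl⟩
        obtain ⟨hld, hu2⟩ := key _ hu l hl hjl
        obtain ⟨_, hi2⟩ : d < l ∧ (i : ℕ) / k ^ l = r / k ^ (l - d) := by
          refine ⟨hld, ?_⟩
          have : k ^ l = k ^ d * k ^ (l - d) := by rw [← pow_add]; congr 1; omega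
          rw [this, ← Nat.div_div_eq_div_mul, hi]
        exact ⟨hl, by rw [hjl, hu2, ← hi2]⟩
      · rintro ⟨hl, hjl⟩
        obtain ⟨hld, hi2⟩ := key _ hi l hl hjl
        obtain ⟨_, hu2⟩ : d < l ∧ (u : ℕ) / k ^ l = r / k ^ (l - d) := by
          refine ⟨hld, ?_⟩
          have : k ^ l = k ^ d * k ^ (l - d) := by rw [← pow_add]; congr 1; omega
          rw [this, ← Nat.div_div_eq_div_mul, hu]
        exact ⟨hl, by rw [hjl, hi2, ← hu2]⟩
    have hju : (j : ℕ) ≠ (u : ℕ) := fun h => hj (h ▸ hu)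
    have hji : (j : ℕ) ≠ (i : ℕ) := fun h => hj (h ▸ hi)
    have hlca : lcaHeight k j u = lcaHeight k j i := by unfold lcaHeight; rw [hset]
    simp [treeCov, hju, hji, hlca]
  -- symmetry of treeCov
  have hsym : treeCov k m ρ σ i j = treeCov k m ρ σ j i := by
    have hji : (j : ℕ) ≠ (i : ℕ) := fun h => hj (h ▸ hi)
    simp [treeCov, hji, hji.symm, lcaHeight_symm k i j]
  -- compute both sides
  have hiJ : i ∈ treeBlock k m p r := by
    simp only [treeBlock, Finset.mem_filter, Finset.mem_univ, true_and]; exact hi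
  rw [Finset.sum_congr rfl hrow, Finset.sum_congr rfl houter, hrow i hiJ,
    Finset.sum_const, Finset.sum_const, hsym]
  simp only [nsmul_eq_mul]
  ring
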